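/- Let α > 0, β > 0 and let 0 < c₁ < 1/β. Then there exists a constant c₂ > 0 such that for all vectors ω₁, ω₂ ∈ ℝ² with |ω₁| ≤ c₁ and |ω₂| ≤ c₁, the map ω ↦ Ψ(|ω|) ω with Ψ(s) = (1 − (βs)^α)^{-1/α} satisfies the Lipschitz estimate |Ψ(|ω₁|) ω₁ − Ψ(|ω₂|) ω₂| ≤ c₂ |ω₁ − ω₂|. -/

import Mathlib

/-- The hyperelastic inversion factor `Ψ(s) = (1 − (βs)^α)^{-1/α}`. -/
noncomputable def Psi (α β s : ℝ) : ℝ :=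
  (1 - (β * s) ^ α) ^ (-(1 / α))

private lemma pow_gap (α c₁ : ℝ) (hα : 0 < α) (hc : 0 < c₁) {s t : ℝ}
    (ht : 0 ≤ t) (hts : t ≤ s) (hs : s ≤ c₁) :
    t * (s ^ α - t ^ α) ≤ α * c₁ ^ α * (s - t) := by
  rcases ht.eq_or_lt with h0 | h0
  · subst h0
    simp only [zero_mul, sub_zero]
    have : (0:ℝ) ≤ s := le_trans (le_refl 0) hts
    positivity
  · -- MVT for x ↦ x^α on Icc t c₁, derivative bound α*c₁^α/t
    have hset : Convex ℝ (Set.Icc t c₁) := convex_Icc _ _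
    have hmvt : ‖s ^ α - t ^ α‖ ≤ (α * c₁ ^ α / t) * ‖s - t‖ := by
      refine hset.norm_image_sub_le_of_norm_hasDerivWithin_le
        (f := fun x => x ^ α) (f' := fun x => α * x ^ (α - 1)) ?_ ?_
        ⟨le_refl t, le_trans hts hs⟩ ⟨hts, hs⟩
      · intro x hx
        exact (Real.hasDerivAt_rpow_const
          (Or.inl (ne_of_gt (lt_of_lt_of_le h0 hx.1)))).hasDerivWithinAt
      · intro x hx
        have hx0 : 0 < x := lt_of_lt_of_le h0 hx.1
        have h1 : x ^ (α - 1) = x ^ α / x := by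
          rw [Real.rpow_sub hx0, Real.rpow_one]
        have h2 : x ^ α / x ≤ c₁ ^ α / t :=
          div_le_div₀ (by positivity) (Real.rpow_le_rpow hx0.le hx.2 hα.le) h0 hx.1
        show ‖α * x ^ (α - 1)‖ ≤ α * c₁ ^ α / t
        rw [Real.norm_eq_abs, abs_of_nonneg (by positivity), h1]
        calc α * (x ^ α / x) ≤ α * (c₁ ^ α / t) :=
              mul_le_mul_of_nonneg_left h2 hα.le
          _ = α * c₁ ^ α / t := by ring
    have hnn : 0 ≤ s ^ α - t ^ α := by
      have := Real.rpow_le_rpow ht hts hα.le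
      linarith
    rw [Real.norm_eq_abs, Real.norm_eq_abs, abs_of_nonneg hnn,
      abs_of_nonneg (by linarith : (0:ℝ) ≤ s - t)] at hmvt
    have := mul_le_mul_of_nonneg_left hmvt h0.le
    calc t * (s ^ α - t ^ α) ≤ t * (α * c₁ ^ α / t * (s - t)) := this
      _ = α * c₁ ^ α * (s - t) := by field_simp

theorem stmt_12 (α β c₁ : ℝ) (hα : 0 < α) (hβ : 0 < β)
    (hc₁ : 0 < c₁) (hc₁' : c₁ < 1 / β) :
    ∃ c₂ : ℝ, 0 < c₂ ∧
      ∀ ω₁ ω₂ : EuclideanSpace ℝ (Fin 2), ‖ω₁‖ ≤ c₁ → ‖ω₂‖ ≤ c₁ →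
        ‖Psi α β ‖ω₁‖ • ω₁ - Psi α β ‖ω₂‖ • ω₂‖ ≤ c₂ * ‖ω₁ - ω₂‖ := by
  set u₀ : ℝ := (β * c₁) ^ α with hu₀def
  have hbc : 0 < β * c₁ := by positivity
  have hbc1 : β * c₁ < 1 := by
    rw [lt_div_iff₀ hβ] at hc₁'; linarith [hc₁']
  have hu₀pos : 0 < u₀ := Real.rpow_pos_of_pos hbc α
  have hu₀lt : u₀ < 1 := Real.rpow_lt_one hbc.le hbc1 hα
  have h1u₀ : 0 < 1 - u₀ := by linarith
  set M : ℝ := (1 - u₀) ^ (-(1 / α)) with hMdef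
  set M₁ : ℝ := (1 / α) * (1 - u₀) ^ (-(1 / α) - 1) with hM₁def
  have hMpos : 0 < M := Real.rpow_pos_of_pos h1u₀ _
  have hM₁pos : 0 < M₁ := by
    have := Real.rpow_pos_of_pos h1u₀ (-(1 / α) - 1)
    positivity
  -- basic facts about Psi on [0, c₁]
  have key_u : ∀ s : ℝ, 0 ≤ s → s ≤ c₁ → (β * s) ^ α ≤ u₀ := fun s hs0 hs =>
    Real.rpow_le_rpow (by positivity) (by nlinarith) hα.le
  have hPsi_nonneg : ∀ s : ℝ, 0 ≤ s → s ≤ c₁ → 0 ≤ Psi α β s := by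
    intro s hs0 hs
    exact Real.rpow_nonneg (by linarith [key_u s hs0 hs]) _
  have hPsi_le : ∀ s : ℝ, 0 ≤ s → s ≤ c₁ → Psi α β s ≤ M := by
    intro s hs0 hs
    exact Real.rpow_le_rpow_of_nonpos h1u₀ (by linarith [key_u s hs0 hs])
      (neg_nonpos.mpr (by positivity))
  -- Lipschitz bound for φ(u) = (1-u)^(-(1/α)) on [0, u₀]
  have hphi : ∀ u ∈ Set.Icc (0:ℝ) u₀, ∀ v ∈ Set.Icc (0:ℝ) u₀,
      ‖(1 - u) ^ (-(1/α)) - (1 - v) ^ (-(1/α))‖ ≤ M₁ * ‖u - v‖ := by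
    intro u hu v hv
    refine (convex_Icc (0:ℝ) u₀).norm_image_sub_le_of_norm_hasDerivWithin_le
      (f := fun x => (1 - x) ^ (-(1/α)))
      (f' := fun x => -(1/α) * (1 - x) ^ (-(1/α) - 1) * (-1)) ?_ ?_ hv hu
    · intro x hx
      have hx1 : (1:ℝ) - x ≠ 0 := ne_of_gt (by linarith [hx.2])
      have h := (Real.hasDerivAt_rpow_const (x := 1 - x) (p := -(1/α)) (Or.inl hx1)).comp
        x (((hasDerivAt_id x).const_sub 1))
      simpa [Function.comp_def] using h.hasDerivWithinAt
    · intro x hx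
      have hx1 : 0 < 1 - x := by have : x ≤ u₀ := hx.2; linarith
      have hb : (1 - x) ^ (-(1/α) - 1) ≤ (1 - u₀) ^ (-(1/α) - 1) :=
        Real.rpow_le_rpow_of_nonpos h1u₀ (by linarith [hx.2])
          (by linarith [one_div_pos.mpr hα])
      rw [Real.norm_eq_abs]
      have habs : |(-(1/α) * (1 - x) ^ (-(1/α) - 1) * (-1))|
          = (1/α) * (1 - x) ^ (-(1/α) - 1) := by
        have heq : (-(1/α) * (1 - x) ^ (-(1/α) - 1) * (-1))
            = (1/α) * (1 - x) ^ (-(1/α) - 1) := by ring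
        rw [heq, abs_of_nonneg (mul_nonneg (by positivity)
          (Real.rpow_nonneg hx1.le _))]
      rw [habs, hM₁def]
      exact mul_le_mul_of_nonneg_left hb (by positivity)
  -- main
  refine ⟨M + M₁ * β ^ α * (α * c₁ ^ α), by positivity, ?_⟩
  have key : ∀ ω₁ ω₂ : EuclideanSpace ℝ (Fin 2), ‖ω₁‖ ≤ c₁ → ‖ω₂‖ ≤ c₁ →
      ‖ω₂‖ ≤ ‖ω₁‖ →
      ‖Psi α β ‖ω₁‖ • ω₁ - Psi α β ‖ω₂‖ • ω₂‖
        ≤ (M + M₁ * β ^ α * (α * c₁ ^ α)) * ‖ω₁ - ω₂‖ := by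
    intro ω₁ ω₂ h1 h2 hle
    set s := ‖ω₁‖ with hs
    set t := ‖ω₂‖ with ht
    have hs0 : 0 ≤ s := norm_nonneg _
    have ht0 : 0 ≤ t := norm_nonneg _
    have hdecomp : Psi α β s • ω₁ - Psi α β t • ω₂
        = Psi α β s • (ω₁ - ω₂) + (Psi α β s - Psi α β t) • ω₂ := by
      module
    rw [hdecomp]
    have hstep := norm_add_le (Psi α β s • (ω₁ - ω₂)) ((Psi α β s - Psi α β t) • ω₂)
    rw [norm_smul, norm_smul, Real.norm_eq_abs, Real.norm_eq_abs,
      abs_of_nonneg (hPsi_nonneg s hs0 h1)] at hstep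
    have hT1 : Psi α β s * ‖ω₁ - ω₂‖ ≤ M * ‖ω₁ - ω₂‖ :=
      mul_le_mul_of_nonneg_right (hPsi_le s hs0 h1) (norm_nonneg _)
    -- second term
    have hus : (β * s) ^ α ∈ Set.Icc (0:ℝ) u₀ :=
      ⟨Real.rpow_nonneg (by positivity) _, key_u s hs0 h1⟩
    have hut : (β * t) ^ α ∈ Set.Icc (0:ℝ) u₀ :=
      ⟨Real.rpow_nonneg (by positivity) _, key_u t ht0 h2⟩
    have hphi' := hphi _ hus _ hut
    have hPsieq : Psi α β s - Psi α β t
        = (1 - (β*s)^α) ^ (-(1/α)) - (1 - (β*t)^α) ^ (-(1/α)) := rfl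
    have hgap : |Psi α β s - Psi α β t| ≤ M₁ * ((β*s)^α - (β*t)^α) := by
      rw [hPsieq]
      have hmono : (β*t)^α ≤ (β*s)^α :=
        Real.rpow_le_rpow (by positivity) (by nlinarith) hα.le
      calc |(1 - (β*s)^α) ^ (-(1/α)) - (1 - (β*t)^α) ^ (-(1/α))|
          ≤ M₁ * |(β*s)^α - (β*t)^α| := by
            simpa [Real.norm_eq_abs] using hphi'
        _ = M₁ * ((β*s)^α - (β*t)^α) := by
            rw [abs_of_nonneg (by linarith)]
    have hT2 : |Psi α β s - Psi α β t| * t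
        ≤ M₁ * β ^ α * (α * c₁ ^ α) * (s - t) := by
      have hrw : ∀ x : ℝ, 0 ≤ x → (β * x) ^ α = β ^ α * x ^ α := fun x hx =>
        Real.mul_rpow hβ.le hx
      have h1' := mul_le_mul_of_nonneg_right hgap ht0
      have h2' : M₁ * ((β*s)^α - (β*t)^α) * t ≤ M₁ * β ^ α * (α * c₁ ^ α) * (s - t) := by
        rw [hrw s hs0, hrw t ht0]
        have hg := pow_gap α c₁ hα hc₁ ht0 hle h1
        calc M₁ * (β ^ α * s ^ α - β ^ α * t ^ α) * t
            = M₁ * β ^ α * (t * (s ^ α - t ^ α)) := by ring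
          _ ≤ M₁ * β ^ α * (α * c₁ ^ α * (s - t)) := by
              refine mul_le_mul_of_nonneg_left hg ?_
              positivity
          _ = M₁ * β ^ α * (α * c₁ ^ α) * (s - t) := by ring
      exact h1'.trans h2'
    have hst : s - t ≤ ‖ω₁ - ω₂‖ := by
      have := norm_sub_norm_le ω₁ ω₂
      linarith
    have hT2' : |Psi α β s - Psi α β t| * t
        ≤ M₁ * β ^ α * (α * c₁ ^ α) * ‖ω₁ - ω₂‖ := by
      refine hT2.trans (mul_le_mul_of_nonneg_left hst ?_)
      positivity
    calc ‖Psi α β s • (ω₁ - ω₂) + (Psi α β s - Psi α β t) • ω₂‖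
        ≤ Psi α β s * ‖ω₁ - ω₂‖ + |Psi α β s - Psi α β t| * t := hstep
      _ ≤ M * ‖ω₁ - ω₂‖ + M₁ * β ^ α * (α * c₁ ^ α) * ‖ω₁ - ω₂‖ :=
          add_le_add hT1 hT2'
      _ = (M + M₁ * β ^ α * (α * c₁ ^ α)) * ‖ω₁ - ω₂‖ := by ring
  intro ω₁ ω₂ h1 h2
  rcases le_total ‖ω₂‖ ‖ω₁‖ with h | h
  · exact key ω₁ ω₂ h1 h2 h
  · have := key ω₂ ω₁ h2 h1 h
    rwa [norm_sub_rev, norm_sub_rev ω₂ ω₁] at this
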